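/- For every poset X and every S ∈ Dn(Dn(Up X)), one has λ_X(μ^Dn_{Up X}(S)) = Up(μ^Dn_X)(λ_{Dn X}(Dn(λ_X)(S))); concretely, {T ∈ Dn X | ∀ s ∈ S, ∀ t ∈ s, (t ∩ T).Nonempty} equals the upward closure (with respect to inclusion of lower sets) of the images under union of those T ∈ Dn(Dn X) such that for all s ∈ S there exists u ∈ T with (t ∩ u).Nonempty for all t ∈ s. -/
import Mathlib


/-- The action of the upset functor `Up` on a map: the upward closure of the image. -/
def UpMap {X Y : Type*} [Preorder X] [Preorder Y] (f : X → Y) (S : UpperSet X) :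
    UpperSet Y :=
  upperClosure (f '' (S : Set X))

/-- The action of the downset functor `Dn` on a map: the downward closure of the image. -/
def DnMap {X Y : Type*} [Preorder X] [Preorder Y] (f : X → Y) (S : LowerSet X) :
    LowerSet Y :=
  lowerClosure (f '' (S : Set X))

/-- The unit of the upset monad: `x ↦ ↑{x}`. -/
def UpUnit {X : Type*} [Preorder X] (x : X) : UpperSet X :=
  UpperSet.Ici x

/-- The unit of the downset monad: `x ↦ ↓{x}`. -/
def DnUnit {X : Type*} [Preorder X] (x : X) : LowerSet X :=
  LowerSet.Iic x

/-- The multiplication of the upset monad: union. -/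
def UpMul {X : Type*} [Preorder X] (S : UpperSet (UpperSet X)) : UpperSet X :=
  ⟨{x : X | ∃ s ∈ S, x ∈ s}, by
    rintro a b hab ⟨s, hs, has⟩
    exact ⟨s, hs, s.upper hab has⟩⟩

/-- The multiplication of the downset monad: union. -/
def DnMul {X : Type*} [Preorder X] (S : LowerSet (LowerSet X)) : LowerSet X :=
  ⟨{x : X | ∃ s ∈ S, x ∈ s}, by
    rintro a b hba ⟨s, hs, has⟩
    exact ⟨s, hs, s.lower hba has⟩⟩

/-- The distributive law `λ_X : Dn (Up X) → Up (Dn X)`,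
`S ↦ {T ∈ Dn X | ∀ s ∈ S, s ∩ T ≠ ∅}`. -/
def distLaw {X : Type*} [Preorder X] (S : LowerSet (UpperSet X)) : UpperSet (LowerSet X) :=
  ⟨{T : LowerSet X | ∀ s ∈ S, ((s : Set X) ∩ (T : Set X)).Nonempty}, by
    intro T T' hTT' h s hs
    exact (h s hs).imp fun x hx => ⟨hx.1, hTT' hx.2⟩⟩

/-- The multiplication law of the distributive law for `μ^Dn`:
`λ_X (μ^Dn_{Up X} S) = Up(μ^Dn_X) (λ_{Dn X} (Dn(λ_X) S))`, and concretely
`{T ∈ Dn X | ∀ s ∈ S, ∀ t ∈ s, (t ∩ T).Nonempty}` is the upward closure (with respect to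
inclusion of lower sets) of the unions of those `U ∈ Dn (Dn X)` such that for all `s ∈ S`
there is `u ∈ U` meeting every `t ∈ s`. -/
theorem distLaw_dnMul {X : Type*} [PartialOrder X] (S : LowerSet (LowerSet (UpperSet X))) :
    distLaw (DnMul S) = UpMap (DnMul (X := X)) (distLaw (DnMap (distLaw (X := X)) S)) ∧
    (distLaw (DnMul S) : Set (LowerSet X))
      = {T : LowerSet X | ∃ U : LowerSet (LowerSet X),
          (∀ s ∈ S, ∃ u ∈ U, ∀ t ∈ s, ((t : Set X) ∩ (u : Set X)).Nonempty) ∧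
          DnMul U ≤ T} ∧
    (distLaw (DnMul S) : Set (LowerSet X))
      = {T : LowerSet X | ∀ s ∈ S, ∀ t ∈ s, ((t : Set X) ∩ (T : Set X)).Nonempty} := by

  -- key characterization of membership in `distLaw (DnMul S)`
  have key : ∀ T : LowerSet X, T ∈ distLaw (DnMul S) ↔
      ∀ s ∈ S, ∀ t ∈ s, ((t : Set X) ∩ (T : Set X)).Nonempty := by
    intro T
    constructor
    · intro h s hs t ht
      exact h t ⟨s, hs, ht⟩
    · rintro h t ⟨s, hs, ht⟩
      exact h s hs t ht
  -- second characterization: via an intermediate lower set of lower sets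
  have key2 : ∀ T : LowerSet X, T ∈ distLaw (DnMul S) ↔
      ∃ U : LowerSet (LowerSet X),
        (∀ s ∈ S, ∃ u ∈ U, ∀ t ∈ s, ((t : Set X) ∩ (u : Set X)).Nonempty) ∧
        DnMul U ≤ T := by
    intro T
    rw [key]
    constructor
    · intro h
      refine ⟨LowerSet.Iic T, fun s hs => ⟨T, le_refl T, h s hs⟩, ?_⟩
      rintro x ⟨u, hu, hx⟩
      exact (LowerSet.mem_Iic_iff.mp hu) hx
    · rintro ⟨U, hU, hUT⟩ s hs t ht
      obtain ⟨u, huU, hu⟩ := hU s hs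
      obtain ⟨x, hxt, hxu⟩ := hu t ht
      exact ⟨x, hxt, hUT ⟨u, huU, hxu⟩⟩
  refine ⟨?_, ?_, ?_⟩
  · ext T
    simp only [SetLike.mem_coe]
    rw [key2]
    show _ ↔ T ∈ upperClosure (DnMul '' (distLaw (DnMap (distLaw (X := X)) S) : Set _))
    rw [mem_upperClosure]
    constructor
    · rintro ⟨U, hU, hUT⟩
      refine ⟨DnMul U, ⟨U, ?_, rfl⟩, hUT⟩
      intro s' hs'
      obtain ⟨a, ⟨s, hs, rfl⟩, hle⟩ := hs'
      obtain ⟨u, huU, hu⟩ := hU s hs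
      exact ⟨u, hle hu, huU⟩
    · rintro ⟨_, ⟨U, hUmem, rfl⟩, hUT⟩
      refine ⟨U, ?_, hUT⟩
      intro s hs
      have : ((distLaw s : Set (LowerSet X)) ∩ (U : Set (LowerSet X))).Nonempty :=
        hUmem (distLaw s) (subset_lowerClosure ⟨s, hs, rfl⟩)
      obtain ⟨u, hu1, hu2⟩ := this
      exact ⟨u, hu2, hu1⟩
  · ext T
    exact key2 T
  · ext T
    exact key T
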